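/- Let Λ be a nilpotent element of a commutative ℚ-algebra and let G_n(Λ) be the unique nilpotent element with exp(G_n(Λ)) = (e^Λ)_n (the degree-n Taylor truncation of exp). Then G_n(Λ) − Λ lies in the ideal generated by Λ^{n+1}; equivalently, G_n(Λ) = Λ + Λ^{n+1}·q(Λ) for some polynomial q with rational coefficients. -/

import Mathlib

noncomputable section

/-- The (finite) exponential series of an element of a commutative `ℚ`-algebra;
for a nilpotent element this equals the full exponential series. -/
def nilExp {R : Type*} [CommRing R] [Algebra ℚ R] (a : R) : R :=
  ∑ j ∈ Finset.range (nilpotencyClass a + 1), (j.factorial : ℚ)⁻¹ • a ^ j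

namespace NilExpAux

open Finset Polynomial

variable {R : Type*} [CommRing R] [Algebra ℚ R]

/-- Truncated exponential series. -/
def expN (N : ℕ) (a : R) : R := ∑ j ∈ Finset.range N, (j.factorial : ℚ)⁻¹ • a ^ j

lemma expN_stable {a : R} {m N : ℕ} (ha : a ^ m = 0) (h : m ≤ N) :
    expN N a = expN m a := by
  unfold expN
  refine (Finset.sum_subset (Finset.range_subset_range.mpr h) ?_).symm
  intro j _ hj'
  simp only [Finset.mem_range, not_lt] at hj'
  rw [pow_eq_zero_of_le hj' ha, smul_zero]

lemma nilExp_eq_expN {a : R} (ha : IsNilpotent a) {m N : ℕ} (hm : a ^ m = 0)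
    (h : m ≤ N) : nilExp a = expN N a := by
  have hc : a ^ nilpotencyClass a = 0 := pow_nilpotencyClass ha
  have hcm : nilpotencyClass a ≤ m := Nat.sInf_le hm
  have h1 : nilExp a = expN (nilpotencyClass a + 1) a := rfl
  rw [h1, expN_stable hc (Nat.le_succ _), expN_stable hc (le_trans hcm h)]

lemma add_pow_eq_zero {a b : R} {p q : ℕ} (ha : a ^ p = 0) (hb : b ^ q = 0) :
    (a + b) ^ (p + q) = 0 := by
  rw [add_pow]
  apply Finset.sum_eq_zero
  intro i hi
  rw [Finset.mem_range] at hi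
  by_cases hip : p ≤ i
  · rw [pow_eq_zero_of_le hip ha, zero_mul, zero_mul]
  · rw [pow_eq_zero_of_le (by omega : q ≤ p + q - i) hb, mul_zero, zero_mul]

lemma expN_add {a b : R} {p q : ℕ} (ha : a ^ p = 0) (hb : b ^ q = 0) :
    expN (p + q) (a + b) = expN p a * expN q b := by
  set N := p + q with hN
  have hgrid : expN p a * expN q b
      = ∑ i ∈ range N, ∑ k ∈ range N,
          ((i.factorial : ℚ)⁻¹ * (k.factorial : ℚ)⁻¹) • (a ^ i * b ^ k) := by
    rw [expN, expN, Finset.sum_mul_sum]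
    have hterm : ∀ i k : ℕ, ((i.factorial : ℚ)⁻¹ • a ^ i) * ((k.factorial : ℚ)⁻¹ • b ^ k)
        = ((i.factorial : ℚ)⁻¹ * (k.factorial : ℚ)⁻¹) • (a ^ i * b ^ k) := by
      intro i k
      rw [Algebra.smul_mul_assoc, Algebra.mul_smul_comm, smul_smul]
    simp_rw [hterm]
    calc ∑ i ∈ range p, ∑ k ∈ range q,
          ((i.factorial : ℚ)⁻¹ * (k.factorial : ℚ)⁻¹) • (a ^ i * b ^ k)
        = ∑ i ∈ range p, ∑ k ∈ range N,
          ((i.factorial : ℚ)⁻¹ * (k.factorial : ℚ)⁻¹) • (a ^ i * b ^ k) := by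
          refine Finset.sum_congr rfl fun i _ => ?_
          refine Finset.sum_subset (Finset.range_subset_range.mpr (Nat.le_add_left q p)) ?_
          intro k _ hk
          simp only [Finset.mem_range, not_lt] at hk
          rw [pow_eq_zero_of_le hk hb, mul_zero, smul_zero]
      _ = ∑ i ∈ range N, ∑ k ∈ range N,
          ((i.factorial : ℚ)⁻¹ * (k.factorial : ℚ)⁻¹) • (a ^ i * b ^ k) := by
          refine Finset.sum_subset (Finset.range_subset_range.mpr (Nat.le_add_right p q)) ?_
          intro i _ hi
          simp only [Finset.mem_range, not_lt] at hi
          refine Finset.sum_eq_zero fun k _ => ?_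
          rw [pow_eq_zero_of_le hi ha, zero_mul, smul_zero]
  rw [hgrid]
  have hLHS : expN N (a + b) = ∑ j ∈ range N, ∑ i ∈ range N,
      ((j.factorial : ℚ)⁻¹ * (j.choose i : ℚ)) • (a ^ i * b ^ (j - i)) := by
    rw [expN]
    refine Finset.sum_congr rfl fun j hj => ?_
    rw [Finset.mem_range] at hj
    rw [add_pow, Finset.smul_sum]
    have hterm : ∀ i : ℕ, (j.factorial : ℚ)⁻¹ • (a ^ i * b ^ (j - i) * (j.choose i : R))
        = ((j.factorial : ℚ)⁻¹ * (j.choose i : ℚ)) • (a ^ i * b ^ (j - i)) := by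
      intro i
      have hc : (j.choose i : R) = algebraMap ℚ R (j.choose i : ℚ) := by
        simp [map_natCast]
      rw [hc, mul_comm (a ^ i * b ^ (j - i)), ← Algebra.smul_def, smul_smul]
    simp_rw [hterm]
    refine Finset.sum_subset (Finset.range_subset_range.mpr (by omega)) ?_
    intro i _ hi
    simp only [Finset.mem_range, not_lt] at hi
    rw [Nat.choose_eq_zero_of_lt (by omega), Nat.cast_zero, mul_zero, zero_smul]
  rw [hLHS, Finset.sum_comm]
  refine Finset.sum_congr rfl fun i hi => ?_
  rw [Finset.mem_range] at hi
  by_cases hip : p ≤ i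
  · have hai : a ^ i = 0 := pow_eq_zero_of_le hip ha
    rw [Finset.sum_eq_zero fun j _ => by rw [hai, zero_mul, smul_zero],
      Finset.sum_eq_zero fun k _ => by rw [hai, zero_mul, smul_zero]]
  · push_neg at hip
    calc ∑ j ∈ range N, ((j.factorial : ℚ)⁻¹ * (j.choose i : ℚ)) • (a ^ i * b ^ (j - i))
        = ∑ j ∈ Finset.Ico i N, ((j.factorial : ℚ)⁻¹ * (j.choose i : ℚ)) • (a ^ i * b ^ (j - i)) := by
          refine (Finset.sum_subset ?_ ?_).symm
          · intro j hj
            rw [Finset.mem_Ico] at hj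
            exact Finset.mem_range.mpr hj.2
          · intro j hj hj'
            rw [Finset.mem_range] at hj
            rw [Finset.mem_Ico, not_and_or, not_le, not_lt] at hj'
            rcases hj' with hj' | hj'
            · rw [Nat.choose_eq_zero_of_lt hj', Nat.cast_zero, mul_zero, zero_smul]
            · omega
      _ = ∑ k ∈ range (N - i),
            (((i + k).factorial : ℚ)⁻¹ * ((i + k).choose i : ℚ)) • (a ^ i * b ^ (i + k - i)) := by
          rw [Finset.sum_Ico_eq_sum_range]
      _ = ∑ k ∈ range (N - i), ((i.factorial : ℚ)⁻¹ * (k.factorial : ℚ)⁻¹) • (a ^ i * b ^ k) := by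
          refine Finset.sum_congr rfl fun k _ => ?_
          have h1 : i + k - i = k := by omega
          have h2 : (((i + k).factorial : ℚ))⁻¹ * ((i + k).choose i : ℚ)
              = (i.factorial : ℚ)⁻¹ * (k.factorial : ℚ)⁻¹ := by
            rw [Nat.cast_choose ℚ (Nat.le_add_right i k), h1]
            have hf1 : ((i + k).factorial : ℚ) ≠ 0 := Nat.cast_ne_zero.mpr (Nat.factorial_ne_zero _)
            have hf2 : (i.factorial : ℚ) ≠ 0 := Nat.cast_ne_zero.mpr (Nat.factorial_ne_zero _)
            have hf3 : (k.factorial : ℚ) ≠ 0 := Nat.cast_ne_zero.mpr (Nat.factorial_ne_zero _)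
            field_simp
          rw [h1, h2]
      _ = ∑ k ∈ range N, ((i.factorial : ℚ)⁻¹ * (k.factorial : ℚ)⁻¹) • (a ^ i * b ^ k) := by
          refine Finset.sum_subset (Finset.range_subset_range.mpr (by omega)) ?_
          intro k hk hk'
          simp only [Finset.mem_range, not_lt] at hk'
          have hkq : q ≤ k := by omega
          rw [pow_eq_zero_of_le hkq hb, mul_zero, smul_zero]

lemma expN_zero_of_pos {N : ℕ} (h : 1 ≤ N) : expN N (0 : R) = 1 := by
  rw [expN_stable (pow_one (0 : R)) h]
  simp [expN]

lemma nilExp_zero : nilExp (0 : R) = 1 := by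
  rw [nilExp_eq_expN (IsNilpotent.zero) (pow_one (0 : R)) (le_refl 1)]
  exact expN_zero_of_pos le_rfl

lemma nilExp_add {a b : R} (ha : IsNilpotent a) (hb : IsNilpotent b) :
    nilExp (a + b) = nilExp a * nilExp b := by
  obtain ⟨m, hm⟩ := ha
  obtain ⟨k, hk⟩ := hb
  rw [nilExp_eq_expN ⟨m + k, add_pow_eq_zero hm hk⟩ (add_pow_eq_zero hm hk) le_rfl,
    expN_add hm hk, ← nilExp_eq_expN ⟨m, hm⟩ hm le_rfl, ← nilExp_eq_expN ⟨k, hk⟩ hk le_rfl]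

lemma nilExp_mul_neg {a : R} (ha : IsNilpotent a) : nilExp a * nilExp (-a) = 1 := by
  rw [← nilExp_add ha ha.neg, add_neg_cancel, nilExp_zero]

lemma expN_split (a : R) (M : ℕ) :
    expN (M + 2) a = 1 + a + a ^ 2 * ∑ j ∈ range M, ((j + 2).factorial : ℚ)⁻¹ • a ^ j := by
  rw [expN, Finset.sum_range_succ', Finset.sum_range_succ']
  have hterm : ∀ j : ℕ, ((j + 1 + 1).factorial : ℚ)⁻¹ • a ^ (j + 1 + 1)
      = a ^ 2 * (((j + 2).factorial : ℚ)⁻¹ • a ^ j) := by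
    intro j
    have : a ^ (j + 1 + 1) = a ^ 2 * a ^ j := by
      rw [← pow_add]; ring_nf
    rw [this, Algebra.mul_smul_comm]
  simp_rw [hterm, ← Finset.mul_sum]
  simp [Nat.factorial]
  ring

lemma eq_zero_of_nilExp_eq_one {d : R} (hd : IsNilpotent d) (h : nilExp d = 1) : d = 0 := by
  obtain ⟨m, hm⟩ := hd
  have hm2 : d ^ (m + 2) = 0 := pow_eq_zero_of_le (by omega) hm
  rw [nilExp_eq_expN ⟨m, hm⟩ hm2 le_rfl, expN_split] at h
  set w : R := ∑ j ∈ range m, ((j + 2).factorial : ℚ)⁻¹ • d ^ j with hw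
  have hdw : IsNilpotent (d * w) := (Commute.all d w).isNilpotent_mul_right ⟨m, hm⟩
  have hu : IsUnit (1 + d * w) := hdw.isUnit_one_add
  have h2 : (1 + d * w) * d = (1 + d * w) * 0 := by linear_combination h
  exact hu.mul_left_cancel h2

lemma nilExp_injective {a b : R} (ha : IsNilpotent a) (hb : IsNilpotent b)
    (h : nilExp a = nilExp b) : a = b := by
  have hd : IsNilpotent (a - b) := (Commute.all a b).isNilpotent_sub ha hb
  have h1 : nilExp a = nilExp b * nilExp (a - b) := by
    rw [← nilExp_add hb hd]
    congr 1
    ring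
  have hub : IsUnit (nilExp b) := isUnit_iff_exists_inv.mpr ⟨_, nilExp_mul_neg hb⟩
  have h2 : nilExp b * nilExp (a - b) = nilExp b * 1 := by
    rw [mul_one]; exact h1.symm.trans h
  have h3 : nilExp (a - b) = 1 := hub.mul_left_cancel h2
  exact sub_eq_zero.mp (eq_zero_of_nilExp_eq_one hd h3)

/-- Membership in the subalgebra generated by Λ as an existential. -/
lemma mem_adjoin_iff {Λ x : R} :
    x ∈ Algebra.adjoin ℚ {Λ} ↔ ∃ p : Polynomial ℚ, aeval Λ p = x := by
  rw [Algebra.adjoin_singleton_eq_range_aeval ℚ Λ]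
  exact AlgHom.mem_range _

lemma expN_mem {Λ : R} {x : R} (hx : x ∈ Algebra.adjoin ℚ {Λ}) (N : ℕ) :
    expN N x ∈ Algebra.adjoin ℚ {Λ} := by
  refine Subalgebra.sum_mem _ fun j _ => ?_
  exact Subalgebra.smul_mem _ (Subalgebra.pow_mem _ hx j) _

/-- Newton iteration: every `1 + r` with `r` in the "ideal" `Λ^{n+1}·S` has a
logarithm in the same ideal. -/
lemma newton (Λ : R) (n : ℕ) : ∀ m : ℕ, ∀ r : R, r ^ m = 0 →
    (∃ s ∈ Algebra.adjoin ℚ {Λ}, r = Λ ^ (n + 1) * s) →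
    ∃ c : R, IsNilpotent c ∧ (∃ s ∈ Algebra.adjoin ℚ {Λ}, c = Λ ^ (n + 1) * s) ∧
      nilExp c = 1 + r := by
  intro m
  induction m with
  | zero =>
    intro r h0 _
    have h1 : (1 : R) = 0 := by simpa using h0
    haveI : Subsingleton R := subsingleton_of_zero_eq_one h1.symm
    exact ⟨0, IsNilpotent.zero, ⟨0, Subalgebra.zero_mem _, by simp⟩, Subsingleton.elim _ _⟩
  | succ m ih =>
    intro r hr hrT
    obtain ⟨s, hsS, hs⟩ := hrT
    have hrS : r ∈ Algebra.adjoin ℚ {Λ} := by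
      rw [hs]
      exact Subalgebra.mul_mem _ (Subalgebra.pow_mem _ (Algebra.self_mem_adjoin_singleton ℚ Λ) _) hsS
    by_cases hm : m = 0
    · subst hm
      have hr0 : r = 0 := by simpa using hr
      exact ⟨0, IsNilpotent.zero, ⟨0, Subalgebra.zero_mem _, by simp⟩,
        by rw [nilExp_zero, hr0, add_zero]⟩
    · have hrnil : IsNilpotent r := ⟨m + 1, hr⟩
      have hnr : (-r) ^ (m + 1) = 0 := by
        rw [neg_pow, hr, mul_zero]
      have hnr3 : (-r) ^ (m + 1 + 2) = 0 := pow_eq_zero_of_le (by omega) hnr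
      set w : R := ∑ j ∈ range (m + 1), ((j + 2).factorial : ℚ)⁻¹ • (-r) ^ j with hw
      have hexpnr : nilExp (-r) = 1 + (-r) + (-r) ^ 2 * w :=
        (nilExp_eq_expN hrnil.neg hnr3 le_rfl).trans (expN_split (-r) (m + 1))
      have hwS : w ∈ Algebra.adjoin ℚ {Λ} := by
        refine Subalgebra.sum_mem _ fun j _ => ?_
        exact Subalgebra.smul_mem _ (Subalgebra.pow_mem _ (Subalgebra.neg_mem _ hrS) j) _
      set r' : R := (1 + r) * nilExp (-r) - 1 with hr'
      have hr'_eq : r' = r ^ 2 * ((1 + r) * w - 1) := by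
        rw [hr', hexpnr]; ring
      have hr'pow : r' ^ m = 0 := by
        rw [hr'_eq, mul_pow, ← pow_mul, pow_eq_zero_of_le (by omega : m + 1 ≤ 2 * m) hr,
          zero_mul]
      have hr'T : ∃ s ∈ Algebra.adjoin ℚ {Λ}, r' = Λ ^ (n + 1) * s := by
        refine ⟨s * (r * ((1 + r) * w - 1)), ?_, ?_⟩
        · refine Subalgebra.mul_mem _ hsS (Subalgebra.mul_mem _ hrS ?_)
          refine Subalgebra.sub_mem _ (Subalgebra.mul_mem _ ?_ hwS) (Subalgebra.one_mem _)
          exact Subalgebra.add_mem _ (Subalgebra.one_mem _) hrS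
        · rw [hr'_eq, hs]; ring
      obtain ⟨c', hc'nil, ⟨s', hs'S, hs'⟩, hc'exp⟩ := ih r' hr'pow hr'T
      refine ⟨r + c', (Commute.all r c').isNilpotent_add hrnil hc'nil,
        ⟨s + s', Subalgebra.add_mem _ hsS hs'S, by rw [hs, hs']; ring⟩, ?_⟩
      rw [nilExp_add hrnil hc'nil, hc'exp, hr']
      have h1 : nilExp r * nilExp (-r) = 1 := nilExp_mul_neg hrnil
      linear_combination (1 + r) * h1

end NilExpAux

/-- if `G` is the (unique) nilpotent logarithm of the degree-`n`
Taylor truncation `(e^Λ)_n` of the exponential of a nilpotent `Λ`, then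
`G = Λ + Λ^{n+1}·q(Λ)` for some polynomial `q` with rational coefficients; i.e.
`G - Λ` lies in the ideal generated by `Λ^{n+1}`. -/
theorem log_of_truncated_exponential_agrees_to_order
    {R : Type*} [CommRing R] [Algebra ℚ R]
    (Λ : R) (hΛ : IsNilpotent Λ) (n : ℕ)
    (G : R) (hG : IsNilpotent G)
    (hexp : nilExp G = ∑ j ∈ Finset.range (n + 1), (j.factorial : ℚ)⁻¹ • Λ ^ j) :
    ∃ q : Polynomial ℚ, G = Λ + Λ ^ (n + 1) * Polynomial.aeval Λ q := by
  classical
  open Finset NilExpAux Polynomial in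
  obtain ⟨p, hp⟩ := hΛ
  -- the truncated exponential
  set E : R := ∑ j ∈ Finset.range (n + 1), (j.factorial : ℚ)⁻¹ • Λ ^ j with hE
  have hEexp : E = expN (n + 1) Λ := rfl
  set K : ℕ := n + 1 + p with hK
  have hpK : Λ ^ K = 0 := pow_eq_zero_of_le (by omega) hp
  have hΛnil : IsNilpotent Λ := ⟨p, hp⟩
  -- the tail of the exponential series
  have htail : expN K Λ = E + Λ ^ (n + 1) *
      ∑ k ∈ Finset.range (K - (n + 1)), ((n + 1 + k).factorial : ℚ)⁻¹ • Λ ^ k := by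
    have h2 : ∑ j ∈ Finset.Ico (n + 1) K, (j.factorial : ℚ)⁻¹ • Λ ^ j
        = Λ ^ (n + 1) * ∑ k ∈ Finset.range (K - (n + 1)), ((n + 1 + k).factorial : ℚ)⁻¹ • Λ ^ k := by
      rw [Finset.sum_Ico_eq_sum_range, Finset.mul_sum]
      refine Finset.sum_congr rfl fun k _ => ?_
      rw [Algebra.mul_smul_comm, ← pow_add]
    calc expN K Λ = ∑ j ∈ Finset.Ico 0 K, (j.factorial : ℚ)⁻¹ • Λ ^ j := by
          rw [expN, Finset.range_eq_Ico]
      _ = ∑ j ∈ Finset.Ico 0 (n + 1), (j.factorial : ℚ)⁻¹ • Λ ^ j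
            + ∑ j ∈ Finset.Ico (n + 1) K, (j.factorial : ℚ)⁻¹ • Λ ^ j :=
          (Finset.sum_Ico_consecutive _ (Nat.zero_le _) (by omega)).symm
      _ = E + Λ ^ (n + 1) * ∑ k ∈ Finset.range (K - (n + 1)),
            ((n + 1 + k).factorial : ℚ)⁻¹ • Λ ^ k := by
          rw [h2, hEexp, expN, Finset.range_eq_Ico, Finset.range_eq_Ico]
  have hexpKS : ∀ x : R, x ∈ Algebra.adjoin ℚ {Λ} → ∀ N, expN N x ∈ Algebra.adjoin ℚ {Λ} :=
    fun x hx N => expN_mem hx N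
  have hΛS : Λ ∈ Algebra.adjoin ℚ {Λ} := Algebra.self_mem_adjoin_singleton ℚ Λ
  -- r₀ = E * exp(-Λ) - 1
  set r₀ : R := E * nilExp (-Λ) - 1 with hr₀
  have hnΛ : (-Λ) ^ p = 0 := by rw [neg_pow, hp, mul_zero]
  have hexpnegS : nilExp (-Λ) ∈ Algebra.adjoin ℚ {Λ} := by
    rw [nilExp_eq_expN hΛnil.neg hnΛ (le_refl p)]
    exact expN_mem (Subalgebra.neg_mem _ hΛS) p
  have hmulneg : nilExp Λ * nilExp (-Λ) = 1 := nilExp_mul_neg hΛnil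
  set s₀ : R := ∑ k ∈ Finset.range (K - (n + 1)), ((n + 1 + k).factorial : ℚ)⁻¹ • Λ ^ k with hs₀
  have hs₀S : s₀ ∈ Algebra.adjoin ℚ {Λ} := by
    refine Subalgebra.sum_mem _ fun k _ => ?_
    exact Subalgebra.smul_mem _ (Subalgebra.pow_mem _ hΛS k) _
  have hexpΛ : nilExp Λ = E + Λ ^ (n + 1) * s₀ := by
    rw [nilExp_eq_expN hΛnil hpK (le_refl K), htail]
  have hr₀eq : r₀ = Λ ^ (n + 1) * (-(s₀ * nilExp (-Λ))) := by
    rw [hr₀]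
    linear_combination hmulneg - nilExp (-Λ) * hexpΛ
  have hr₀T : ∃ s ∈ Algebra.adjoin ℚ {Λ}, r₀ = Λ ^ (n + 1) * s :=
    ⟨-(s₀ * nilExp (-Λ)), Subalgebra.neg_mem _ (Subalgebra.mul_mem _ hs₀S hexpnegS), hr₀eq⟩
  have hr₀pow : r₀ ^ p = 0 := by
    rw [hr₀eq, mul_pow, ← pow_mul, pow_eq_zero_of_le (Nat.le_mul_of_pos_left p (Nat.succ_pos n)) hp,
      zero_mul]
  obtain ⟨c, hcnil, ⟨s, hsS, hcs⟩, hcexp⟩ := newton Λ n p r₀ hr₀pow hr₀T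
  have hG' : nilExp (Λ + c) = E := by
    rw [nilExp_add hΛnil hcnil, hcexp, hr₀]
    linear_combination E * hmulneg
  have hGeq : G = Λ + c :=
    nilExp_injective hG ((Commute.all Λ c).isNilpotent_add hΛnil hcnil) (by rw [hexp, hG'])
  obtain ⟨q, hq⟩ := NilExpAux.mem_adjoin_iff.mp hsS
  exact ⟨q, by rw [hGeq, hcs, hq]⟩

end
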